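/- Let B be the commutative monoid on {0,1}³ ∪ {0̄} defined by componentwise addition truncated to 0̄ (with 0̄ absorbing and (0,0,0) neutral). Then B is subdirectly irreducible: every congruence θ on B other than the identity relation contains the pair (0̄, (1,1,1)). -/

import Mathlib

/-- The monoid `B` with universe `{0,1}³ ∪ {0̄}`: `none` is the absorbing
element `0̄`, `some (k,m,n)` is a triple in `{0,1}³` (encoded by `Bool`). -/
def Bcar : Type := Option (Bool × Bool × Bool)

/-- Multiplication: componentwise addition if the result stays in `{0,1}³`,
and `0̄` otherwise; `0̄` is absorbing. -/
def bmul : Bcar → Bcar → Bcar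
  | some (k₁, m₁, n₁), some (k₂, m₂, n₂) =>
      if (k₁ && k₂) || (m₁ && m₂) || (n₁ && n₂) then none
      else some (k₁ || k₂, m₁ || m₂, n₁ || n₂)
  | _, _ => none

instance : DecidableEq Bcar := by unfold Bcar; infer_instance
instance : Fintype Bcar := by unfold Bcar; infer_instance

lemma bkey : ∀ x y : Bcar, x ≠ y → ∃ c d : Bcar,
    (bmul d (bmul c x) = none ∧ bmul d (bmul c y) = some (true, true, true)) ∨
    (bmul d (bmul c x) = some (true, true, true) ∧ bmul d (bmul c y) = none) := by
  letI : ∀ (a : Bcar) (b : Option (Bool × Bool × Bool)), Decidable (@Eq Bcar a b) :=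
    fun a b => instDecidableEqBcar a b
  decide

/-- Every congruence on `B` other than the identity relates `0̄` and `(1,1,1)`. -/
theorem B_subdirectly_irreducible (r : Bcar → Bcar → Prop)
    (hequiv : Equivalence r)
    (hcong : ∀ x y u v : Bcar, r x y → r u v → r (bmul x u) (bmul y v))
    (hnontriv : ∃ x y : Bcar, x ≠ y ∧ r x y) :
    r none (some (true, true, true)) := by
  obtain ⟨x, y, hne, hr⟩ := hnontriv
  obtain ⟨c, d, h⟩ := bkey x y hne
  have h1 : r (bmul d (bmul c x)) (bmul d (bmul c y)) :=
    hcong d d _ _ (hequiv.refl d) (hcong c c x y (hequiv.refl c) hr)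
  rcases h with ⟨ha, hb⟩ | ⟨ha, hb⟩
  · rw [ha, hb] at h1; exact h1
  · rw [ha, hb] at h1; exact hequiv.symm h1
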